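/- Discrepancy principle attainable for small regularization parameters (Proposition 4.3, Hilbert case p = 2): Let W, Z, Y be real Hilbert spaces and X = W × Z. Let F be a map from a subset 𝒟 of X into Y, g : W → [0, ∞) and h : Z → [0, ∞) convex, x† = (w†, z†) ∈ 𝒟 with ‖F(x†) − y^δ‖ ≤ δ for some δ > 0, and fix 0 ≤ η < 1/2 and λ > (1 + η)/(1 − η). Suppose that for every pair α₁, α₂ > 0 there is a point x̄_{α₁,α₂} = (w̄, z̄) ∈ 𝒟 at which F is Fréchet differentiable such that: (a) the tangential cone condition ‖F(x†) − F(x̄) − F′(x̄)(x† − x̄)‖ ≤ η ‖F(x†) − F(x̄)‖ holds between x̄ = x̄_{α₁,α₂} and x†, and (b) there exist subgradients γ of g at w̄ and β of h at z̄ with F′(x̄)*(F(x̄) − y^δ) + (α₁ γ, α₂ β) = 0. Then there exist α₁⁺, α₂⁺ > 0 such that for all α₁ ∈ (0, α₁⁺) and α₂ ∈ (0, α₂⁺) one has ‖F(x̄_{α₁,α₂}) − y^δ‖ < λδ. -/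

import Mathlib

open scoped RealInnerProductSpace

set_option maxHeartbeats 1600000 in
/-- Discrepancy principle attainable for small regularization parameters
(Proposition 4.3, Hilbert case `p = 2`): if for every pair of regularization
parameters `α₁, α₂ > 0` there is a stationary point `xbar α₁ α₂ ∈ 𝒟` at which `F`
is Fréchet differentiable, satisfying the tangential cone condition with respect to
`x† = (w†, z†)` and the first-order optimality condition, then there exist
`α₁⁺, α₂⁺ > 0` such that `‖F (xbar α₁ α₂) − y^δ‖ < λ δ` whenever
`α₁ ∈ (0, α₁⁺)` and `α₂ ∈ (0, α₂⁺)`. -/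
theorem discrepancy_principle_attainable
    {W Z Y : Type*}
    [NormedAddCommGroup W] [InnerProductSpace ℝ W]
    [NormedAddCommGroup Z] [InnerProductSpace ℝ Z]
    [NormedAddCommGroup Y] [InnerProductSpace ℝ Y]
    (𝒟 : Set (W × Z)) (F : W × Z → Y)
    (g : W → ℝ) (h : Z → ℝ)
    (hg : ConvexOn ℝ Set.univ g) (hh : ConvexOn ℝ Set.univ h)
    (hgnn : ∀ w, 0 ≤ g w) (hhnn : ∀ z, 0 ≤ h z)
    (wdag : W) (zdag : Z) (hxdag : (wdag, zdag) ∈ 𝒟)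
    (yδ : Y) (δ : ℝ) (hδ : 0 < δ) (hnoise : ‖F (wdag, zdag) - yδ‖ ≤ δ)
    (η : ℝ) (hη0 : 0 ≤ η) (hη : η < 1 / 2)
    (lam : ℝ) (hlam : (1 + η) / (1 - η) < lam)
    (xbar : ℝ → ℝ → W × Z)
    (hxbar : ∀ α₁ α₂ : ℝ, 0 < α₁ → 0 < α₂ →
      xbar α₁ α₂ ∈ 𝒟 ∧
      ∃ F' : W × Z →L[ℝ] Y, HasFDerivAt F F' (xbar α₁ α₂) ∧
        ‖F (wdag, zdag) - F (xbar α₁ α₂) - F' ((wdag, zdag) - xbar α₁ α₂)‖ ≤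
          η * ‖F (wdag, zdag) - F (xbar α₁ α₂)‖ ∧
        ∃ (γ : W) (β : Z),
          (∀ w : W, g (xbar α₁ α₂).1 + ⟪γ, w - (xbar α₁ α₂).1⟫ ≤ g w) ∧
          (∀ z : Z, h (xbar α₁ α₂).2 + ⟪β, z - (xbar α₁ α₂).2⟫ ≤ h z) ∧
          ∀ (u : W) (v : Z),
            ⟪F (xbar α₁ α₂) - yδ, F' (u, v)⟫ + (α₁ * ⟪γ, u⟫ + α₂ * ⟪β, v⟫) = 0) :
    ∃ α₁p > (0 : ℝ), ∃ α₂p > (0 : ℝ), ∀ α₁ α₂ : ℝ,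
      0 < α₁ → α₁ < α₁p → 0 < α₂ → α₂ < α₂p →
        ‖F (xbar α₁ α₂) - yδ‖ < lam * δ := by
  have hη1 : (0:ℝ) < 1 - η := by linarith
  have hlam0 : (0:ℝ) < lam := lt_of_le_of_lt (div_nonneg (by linarith) hη1.le) hlam
  have hlamη : 1 + η < lam * (1 - η) := (div_lt_iff₀ hη1).mp hlam
  set K : ℝ := lam * δ^2 * ((1-η)*lam - (1+η)) with hK
  have hK0 : 0 < K := by
    apply mul_pos (by positivity); nlinarith
  have hg1 : (0:ℝ) < g wdag + 1 := by nlinarith [hgnn wdag]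
  have hh1 : (0:ℝ) < h zdag + 1 := by nlinarith [hhnn zdag]
  refine ⟨K/(2*(g wdag + 1)), by positivity, K/(2*(h zdag + 1)), by positivity, ?_⟩
  intro α₁ α₂ hα₁ hα₁' hα₂ hα₂'
  obtain ⟨hmem, F', hdF, htcc, γ, β, hγ, hβ, hopt⟩ := hxbar α₁ α₂ hα₁ hα₂
  set xb := xbar α₁ α₂ with hxb
  set r : Y := F xb - yδ with hrdef
  set t : ℝ := ‖r‖ with htdef
  have ht0 : 0 ≤ t := norm_nonneg _
  by_contra hcon
  push_neg at hcon
  -- bound C := α₁ g† + α₂ h†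
  have hCbound : α₁ * g wdag + α₂ * h zdag < K := by
    have e1 : α₁ * g wdag < K/2 := by
      calc α₁ * g wdag ≤ α₁ * (g wdag + 1) := by nlinarith [hgnn wdag]
        _ < K/(2*(g wdag + 1)) * (g wdag + 1) := by
            exact mul_lt_mul_of_pos_right hα₁' hg1
        _ = K/2 := by field_simp
    have e2 : α₂ * h zdag < K/2 := by
      calc α₂ * h zdag ≤ α₂ * (h zdag + 1) := by nlinarith [hhnn zdag]
        _ < K/(2*(h zdag + 1)) * (h zdag + 1) := by
            exact mul_lt_mul_of_pos_right hα₂' hh1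
        _ = K/2 := by field_simp
    linarith
  set u : W := wdag - xb.1 with hu
  set v : Z := zdag - xb.2 with hv
  have hsub : ((wdag, zdag) : W × Z) - xb = (u, v) := rfl
  have hsubg : ⟪γ, u⟫ ≤ g wdag := by
    have := hγ wdag; have := hgnn xb.1; linarith
  have hsubh : ⟪β, v⟫ ≤ h zdag := by
    have := hβ zdag; have := hhnn xb.2; linarith
  have hopt' := hopt u v
  have hinner_F' : ⟪r, F' (u, v)⟫ = -(α₁ * ⟪γ, u⟫ + α₂ * ⟪β, v⟫) := by
    linarith
  have hF'lb : -(α₁ * g wdag + α₂ * h zdag) ≤ ⟪r, F' (u, v)⟫ := by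
    rw [hinner_F']
    have : α₁ * ⟪γ, u⟫ ≤ α₁ * g wdag := mul_le_mul_of_nonneg_left hsubg hα₁.le
    have : α₂ * ⟪β, v⟫ ≤ α₂ * h zdag := mul_le_mul_of_nonneg_left hsubh hα₂.le
    linarith
  set E : Y := F (wdag, zdag) - F xb - F' (u, v) with hE
  have htcc' : ‖E‖ ≤ η * ‖F (wdag, zdag) - F xb‖ := by
    rw [hE, ← hsub]; exact htcc
  set s : ℝ := ‖F (wdag, zdag) - F xb‖ with hs
  have hsle : s ≤ δ + t := by
    have : F (wdag, zdag) - F xb = (F (wdag, zdag) - yδ) - r := by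
      rw [hrdef]; abel
    rw [hs, this]
    exact le_trans (norm_sub_le _ _) (by linarith [norm_nonneg (F (wdag,zdag) - yδ)])
  have hdecomp : F (wdag, zdag) - F xb = F' (u, v) + E := by
    rw [hE]; abel
  have hinnerE : -(t * (η * s)) ≤ ⟪r, E⟫ := by
    have h1 : |⟪r, E⟫| ≤ ‖r‖ * ‖E‖ := abs_real_inner_le_norm r E
    have h2 : ‖r‖ * ‖E‖ ≤ t * (η * s) := by
      rw [← htdef]; exact mul_le_mul_of_nonneg_left htcc' ht0
    have := neg_abs_le ⟪r, E⟫
    linarith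
  have hinner_main : ⟪r, F (wdag, zdag) - F xb⟫ = ⟪r, F' (u, v)⟫ + ⟪r, E⟫ := by
    rw [hdecomp, inner_add_right]
  have hinner_main2 : ⟪r, F (wdag, zdag) - F xb⟫ = ⟪r, F (wdag, zdag) - yδ⟫ - t^2 := by
    have : F (wdag, zdag) - F xb = (F (wdag, zdag) - yδ) - r := by
      rw [hrdef]; abel
    rw [this, inner_sub_right, real_inner_self_eq_norm_sq, htdef]
  have hinnernoise : ⟪r, F (wdag, zdag) - yδ⟫ ≤ t * δ := by
    calc ⟪r, F (wdag, zdag) - yδ⟫ ≤ ‖r‖ * ‖F (wdag, zdag) - yδ‖ := real_inner_le_norm _ _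
      _ ≤ t * δ := mul_le_mul_of_nonneg_left hnoise ht0
  -- combine: (1-η) t² ≤ C + (1+η) δ t
  have hslem : t * η * s ≤ t * η * (δ + t) :=
    mul_le_mul_of_nonneg_left hsle (mul_nonneg ht0 hη0)
  have hkey : (1 - η) * t^2 ≤ (α₁ * g wdag + α₂ * h zdag) + (1 + η) * δ * t := by
    have h1 : -(t * (η * s)) = -(t * η * s) := by ring
    rw [h1] at hinnerE
    linarith [hF'lb, hinnerE, hinner_main, hinner_main2, hinnernoise, hslem]
  -- contradiction with t ≥ lam δ and K
  have hfac1 : 0 ≤ t - lam * δ := by linarith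
  have hfac2 : 0 ≤ (1 - η) * (t + lam * δ) - (1 + η) * δ := by nlinarith
  have hprod := mul_nonneg hfac1 hfac2
  have hexp : (t - lam * δ) * ((1 - η) * (t + lam * δ) - (1 + η) * δ)
      = (1 - η) * t^2 - (1 + η) * δ * t - K := by rw [hK]; ring
  rw [hexp] at hprod
  linarith [hprod, hkey, hCbound]
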